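/- Let n ≥ 0 and let η be the Lorentzian bilinear form on ℝ^{n+2} described in the context. Let ξ ∈ ℝ^{n+2} be a nonzero vector with η(ξ,ξ) = 0, and let S be a linear subspace such that ξ^⊥ = S ⊕ ℝξ (a screen complement). Then there exists a unique vector N ∈ ℝ^{n+2} such that η(N,N) = 0, η(ξ,N) = 1, and η(N,w) = 0 for all w ∈ S. -/

import Mathlib

def mid (n : ℕ) (i : Fin n) : Fin (n + 2) := ⟨(i : ℕ) + 1, by omega⟩

def lastIdx (n : ℕ) : Fin (n + 2) := ⟨n + 1, by omega⟩

/-- The Lorentzian bilinear form on `ℝ^{n+2}` with Gram matrix `[[0,0,1],[0,E_n,0],[1,0,0]]`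
in the basis `U = e_0, X_1 = e_1, …, X_n = e_n, V = e_{n+1}`. -/
def eta (n : ℕ) (x y : Fin (n + 2) → ℝ) : ℝ :=
  x 0 * y (lastIdx n) + x (lastIdx n) * y 0 + ∑ i : Fin n, x (mid n i) * y (mid n i)

lemma eta_add_left (n : ℕ) (x y z : Fin (n + 2) → ℝ) :
    eta n (x + y) z = eta n x z + eta n y z := by
  simp only [eta, Pi.add_apply, add_mul]
  rw [Finset.sum_add_distrib]
  ring

lemma eta_smul_left (n : ℕ) (c : ℝ) (x y : Fin (n + 2) → ℝ) :
    eta n (c • x) y = c * eta n x y := by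
  simp only [eta, Pi.smul_apply, smul_eq_mul, mul_add, Finset.mul_sum, mul_assoc]

/-- `η`-orthogonal complement of a subspace. -/
def etaPerp (n : ℕ) (W : Submodule ℝ (Fin (n + 2) → ℝ)) : Submodule ℝ (Fin (n + 2) → ℝ) where
  carrier := {v | ∀ w ∈ W, eta n v w = 0}
  zero_mem' := by intro w hw; simp [eta]
  add_mem' := by
    intro a b ha hb w hw
    rw [eta_add_left, ha w hw, hb w hw, add_zero]
  smul_mem' := by
    intro c x hx w hw
    rw [eta_smul_left, hx w hw, mul_zero]

lemma eta_symm (n : ℕ) (x y : Fin (n + 2) → ℝ) : eta n x y = eta n y x := by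
  unfold eta
  rw [show (∑ i : Fin n, x (mid n i) * y (mid n i)) = ∑ i : Fin n, y (mid n i) * x (mid n i) from
    Finset.sum_congr rfl fun i _ => mul_comm _ _]
  ring

lemma eta_add_right (n : ℕ) (x y z : Fin (n + 2) → ℝ) :
    eta n x (y + z) = eta n x y + eta n x z := by
  rw [eta_symm, eta_add_left, eta_symm n y x, eta_symm n z x]

lemma eta_smul_right (n : ℕ) (c : ℝ) (x y : Fin (n + 2) → ℝ) :
    eta n x (c • y) = c * eta n x y := by
  rw [eta_symm, eta_smul_left, eta_symm n y x]

lemma eta_sub_left (n : ℕ) (x y z : Fin (n + 2) → ℝ) :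
    eta n (x - y) z = eta n x z - eta n y z := by
  have := eta_add_left n (x - y) y z
  rw [sub_add_cancel] at this; linarith

lemma eta_sub_right (n : ℕ) (x y z : Fin (n + 2) → ℝ) :
    eta n x (y - z) = eta n x y - eta n x z := by
  rw [eta_symm, eta_sub_left, eta_symm n y x, eta_symm n z x]

lemma eta_sub_smul (n : ℕ) (x z : Fin (n + 2) → ℝ) (c : ℝ) :
    eta n (x - c • z) (x - c • z) =
      eta n x x - 2 * c * eta n x z + c ^ 2 * eta n z z := by
  rw [eta_sub_left, eta_smul_left, eta_sub_right, eta_sub_right, eta_smul_right,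
    eta_smul_right, eta_symm n z x]
  ring

lemma eta_add_smul (n : ℕ) (x z : Fin (n + 2) → ℝ) (c : ℝ) :
    eta n (x + c • z) (x + c • z) =
      eta n x x + 2 * c * eta n x z + c ^ 2 * eta n z z := by
  rw [eta_add_left, eta_smul_left, eta_add_right, eta_add_right, eta_smul_right,
    eta_smul_right, eta_symm n z x]
  ring

/-- `eta` bundled as a mathlib bilinear form. -/
def etaB (n : ℕ) : LinearMap.BilinForm ℝ (Fin (n + 2) → ℝ) :=
  LinearMap.mk₂ ℝ (eta n) (eta_add_left n) (eta_smul_left n) (eta_add_right n) (eta_smul_right n)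

@[simp] lemma etaB_apply (n : ℕ) (x y : Fin (n + 2) → ℝ) : etaB n x y = eta n x y := rfl

lemma eta_single (n : ℕ) (v : Fin (n + 2) → ℝ) (j : Fin (n + 2)) :
    eta n v (Pi.single j 1) =
      if j = 0 then v (lastIdx n) else if j = lastIdx n then v 0 else v j := by
  simp only [eta, Pi.single_apply]
  by_cases h0 : j = 0
  · subst h0
    rw [if_pos rfl, if_neg (by simp [lastIdx, Fin.ext_iff]), if_pos rfl,
      Finset.sum_eq_zero (fun i _ => by rw [if_neg (by simp [mid, Fin.ext_iff]), mul_zero])]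
    ring
  · by_cases hl : j = lastIdx n
    · subst hl
      rw [if_neg h0, if_pos rfl, if_pos rfl, if_neg (by simp [lastIdx, Fin.ext_iff]),
        Finset.sum_eq_zero (fun i _ => by
          rw [if_neg (by have := i.isLt; simp only [mid, lastIdx, Fin.ext_iff]; omega), mul_zero])]
      ring
    · have hv0 : (j : ℕ) ≠ 0 := fun h => h0 (Fin.ext (by simpa using h))
      have hvl : (j : ℕ) ≠ n + 1 := fun h => hl (Fin.ext (by simpa [lastIdx] using h))
      have hj2 := j.isLt
      have hk : mid n ⟨(j : ℕ) - 1, by omega⟩ = j := Fin.ext (by simp only [mid]; omega)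
      rw [if_neg h0, if_neg hl, if_neg (fun h => hl h.symm), if_neg (fun h => h0 h.symm),
        Finset.sum_eq_single (⟨(j : ℕ) - 1, by omega⟩ : Fin n)
          (fun i _ hi => by
            rw [if_neg (fun h => hi (Fin.ext (by
              have := Fin.ext_iff.mp h; simp only [mid] at this ⊢; omega))), mul_zero])
          (by simp), hk, if_pos rfl]
      ring

lemma etaB_nondeg (n : ℕ) : (etaB n).Nondegenerate := by
  refine (fun h => ⟨h, fun v hv => h v fun y => by rw [etaB_apply, eta_symm]; exact hv y⟩) ?_
  intro v hv
  have h1 : v (lastIdx n) = 0 := by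
    have := hv (Pi.single 0 1)
    rwa [etaB_apply, eta_single, if_pos rfl] at this
  have h2 : v 0 = 0 := by
    have := hv (Pi.single (lastIdx n) 1)
    rwa [etaB_apply, eta_single, if_neg (by simp [lastIdx, Fin.ext_iff]), if_pos rfl] at this
  funext j
  have h := hv (Pi.single j 1)
  rw [etaB_apply, eta_single] at h
  split_ifs at h with ha hb
  · subst ha; exact h2
  · subst hb; exact h1
  · exact h

lemma etaB_refl (n : ℕ) : (etaB n).IsRefl := by
  intro x y h
  rw [etaB_apply, eta_symm] at h
  exact h

lemma etaPerp_eq_orthogonal (n : ℕ) (W : Submodule ℝ (Fin (n + 2) → ℝ)) :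
    etaPerp n W = (etaB n).orthogonal W := by
  ext v
  constructor
  · intro hv w hw
    have := hv w hw
    rwa [etaB_apply, eta_symm]
  · intro hv w hw
    have := hv w hw
    rwa [etaB_apply, eta_symm] at this

/-- Given a nonzero isotropic vector `ξ` and a screen complement `S` with
`ξ^⊥ = S ⊕ ℝξ`, there is a unique `N` with `η(N,N) = 0`, `η(ξ,N) = 1` and `η(N,S) = 0`. -/
theorem statement8 (n : ℕ) (ξ : Fin (n + 2) → ℝ) (hξ0 : ξ ≠ 0) (hξiso : eta n ξ ξ = 0)
    (S : Submodule ℝ (Fin (n + 2) → ℝ))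
    (hsum : S ⊔ Submodule.span ℝ {ξ} = etaPerp n (Submodule.span ℝ {ξ}))
    (hdisj : S ⊓ Submodule.span ℝ {ξ} = ⊥) :
    ∃! N : Fin (n + 2) → ℝ,
      eta n N N = 0 ∧ eta n ξ N = 1 ∧ ∀ w ∈ S, eta n N w = 0 := by
  have hnd := etaB_nondeg n
  have hrefl := etaB_refl n
  -- ξ is not in S
  have hξS : ξ ∉ S := by
    intro h
    have : ξ ∈ S ⊓ Submodule.span ℝ {ξ} :=
      ⟨h, Submodule.mem_span_singleton_self ξ⟩
    rw [hdisj] at this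
    exact hξ0 this
  -- there is t ⊥ S with eta ξ t ≠ 0
  have hex : ∃ t ∈ etaPerp n S, eta n ξ t ≠ 0 := by
    by_contra hcon
    push_neg at hcon
    have : ξ ∈ (etaB n).orthogonal ((etaB n).orthogonal S) := by
      intro t ht
      have ht' : t ∈ etaPerp n S := by rw [etaPerp_eq_orthogonal]; exact ht
      have := hcon t ht'
      rwa [etaB_apply, eta_symm]
    rw [LinearMap.BilinForm.orthogonal_orthogonal hnd hrefl] at this
    exact hξS this
  obtain ⟨t, htS, hta⟩ := hex
  set a : ℝ := eta n ξ t with ha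
  set N₀ : Fin (n + 2) → ℝ := a⁻¹ • t with hN₀
  have hξN₀ : eta n ξ N₀ = 1 := by
    rw [hN₀, eta_smul_right, ← ha, inv_mul_cancel₀ hta]
  have hN₀S : ∀ w ∈ S, eta n N₀ w = 0 := by
    intro w hw
    rw [hN₀, eta_smul_left, htS w hw, mul_zero]
  set b : ℝ := eta n N₀ N₀ with hb
  set N : Fin (n + 2) → ℝ := N₀ - (b / 2) • ξ with hN
  have hξSperp : ∀ w ∈ S, eta n ξ w = 0 := by
    intro w hw
    have hw' : w ∈ etaPerp n (Submodule.span ℝ {ξ}) := by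
      rw [← hsum]; exact Submodule.mem_sup_left hw
    have := hw' ξ (Submodule.mem_span_singleton_self ξ)
    rwa [eta_symm]
  have hNprops : eta n N N = 0 ∧ eta n ξ N = 1 ∧ ∀ w ∈ S, eta n N w = 0 := by
    refine ⟨?_, ?_, ?_⟩
    · rw [hN, eta_sub_smul, ← hb, eta_symm n N₀ ξ, hξN₀, hξiso]
      ring
    · rw [hN, eta_sub_right, eta_smul_right, eta_smul_right n (b / 2) ξ ξ, hξiso, ← ha,
        inv_mul_cancel₀ hta]
      ring
    · intro w hw
      rw [hN, eta_sub_left, hN₀S w hw, eta_smul_left, hξSperp w hw]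
      ring
  refine ⟨N, hNprops, ?_⟩
  -- uniqueness
  rintro y ⟨hy1, hy2, hy3⟩
  obtain ⟨hn1, hn2, hn3⟩ := hNprops
  set d : Fin (n + 2) → ℝ := y - N with hd
  have hdS : ∀ w ∈ S, eta n d w = 0 := by
    intro w hw
    rw [hd, eta_sub_left, hy3 w hw, hn3 w hw, sub_zero]
  have hdξ : eta n d ξ = 0 := by
    rw [hd, eta_sub_left, eta_symm n y ξ, eta_symm n N ξ, hy2, hn2, sub_self]
  have hdperp : d ∈ etaPerp n (S ⊔ Submodule.span ℝ {ξ}) := by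
    intro w hw
    obtain ⟨s, hs, z, hz, rfl⟩ := Submodule.mem_sup.mp hw
    obtain ⟨c, rfl⟩ := Submodule.mem_span_singleton.mp hz
    rw [eta_add_right, hdS s hs, eta_smul_right, hdξ]
    ring
  have hdspan : d ∈ Submodule.span ℝ {ξ} := by
    have h1 : d ∈ (etaB n).orthogonal ((etaB n).orthogonal (Submodule.span ℝ {ξ})) := by
      rw [← etaPerp_eq_orthogonal n (Submodule.span ℝ {ξ}),
        ← etaPerp_eq_orthogonal n (etaPerp n (Submodule.span ℝ {ξ})), ← hsum]
      exact hdperp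
    rwa [LinearMap.BilinForm.orthogonal_orthogonal hnd hrefl] at h1
  obtain ⟨c, hc⟩ := Submodule.mem_span_singleton.mp hdspan
  have hy : y = N + c • ξ := by rw [hc, hd]; abel
  have hcc : (0 : ℝ) = 2 * c := by
    have h : eta n y y = 0 := hy1
    rw [hy, eta_add_smul, hn1, eta_symm n N ξ, hn2, hξiso] at h
    linarith
  have hc0 : c = 0 := by linarith
  rw [hy, hc0, zero_smul, add_zero]
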